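/- arXiv:2209.02630 — 2 statements merged into one kernel-verified Lean document; each statement's English description precedes it below -/
import Mathlib

section
/- If f : ℝ → ℝ is locally absolutely continuous (with locally integrable derivative f'), then for all j ≥ 1 and ν ∈ ℤ, ∫ f'(x)·N₂(2^j x - ν) dx = -2^j · ∫ f(x)·h̃_{j-1,ν}(x) dx, where h̃_{j-1,ν}(x) = h(2^{j-1} x - ν/2). -/
open MeasureTheory Real

set_option maxHeartbeats 2000000

/-- The hat function `N₂`. -/
noncomputable def hat (x : ℝ) : ℝ :=
  if 0 ≤ x ∧ x ≤ 1 then x else if 1 ≤ x ∧ x ≤ 2 then 2 - x else 0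

/-- The Haar mother function `h = 𝟙_{[0,1/2)} - 𝟙_{[1/2,1)}`. -/
noncomputable def haar (x : ℝ) : ℝ :=
  if 0 ≤ x ∧ x < 1/2 then 1 else if 1/2 ≤ x ∧ x < 1 then -1 else 0

open Set in
lemma triangle_left {g : ℝ → ℝ} {p q : ℝ} (hpq : p ≤ q) (hg : IntegrableOn g (Ioc p q)) :
    ∫ x in Ioc p q, g x * (x - p) = ∫ t in Ioc p q, ∫ x in Ioc t q, g x := by
  have hmeas : MeasurableSet {z : ℝ × ℝ | z.1 < z.2} :=
    measurableSet_lt measurable_fst measurable_snd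
  set μ := volume.restrict (Ioc p q) with hμ
  have hgg : Integrable (fun z : ℝ × ℝ => g z.2) (μ.prod μ) := by
    have h1 : Integrable (fun _ : ℝ => (1:ℝ)) μ := by
      rw [hμ]; exact integrableOn_const measure_Ioc_lt_top.ne
    simpa using h1.mul_prod hg
  have hind : Integrable (({z : ℝ × ℝ | z.1 < z.2}).indicator fun z => g z.2) (μ.prod μ) :=
    hgg.indicator hmeas
  have swap := integral_integral_swap (f := fun t x : ℝ =>
      ({z : ℝ × ℝ | z.1 < z.2}).indicator (fun z => g z.2) (t, x)) (μ := μ) (ν := μ)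
      (by exact hind)
  have hL : (∫ t, (∫ x, ({z : ℝ × ℝ | z.1 < z.2}).indicator (fun z => g z.2) (t, x) ∂μ) ∂μ)
      = ∫ t in Ioc p q, ∫ x in Ioc t q, g x := by
    rw [hμ]
    refine setIntegral_congr_fun measurableSet_Ioc fun t ht => ?_
    have h1 : (fun x => ({z : ℝ × ℝ | z.1 < z.2}).indicator (fun z => g z.2) (t, x))
        = (Ioi t).indicator g := by
      funext x
      by_cases hx : t < x
      · simp [Set.indicator_apply, hx]
      · simp [Set.indicator_apply, hx]
    rw [h1, setIntegral_indicator measurableSet_Ioi]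
    have hset : Ioc p q ∩ Ioi t = Ioc t q := by
      ext y
      simp only [mem_inter_iff, mem_Ioc, mem_Ioi]
      constructor
      · rintro ⟨⟨_, h2⟩, h3⟩; exact ⟨h3, h2⟩
      · rintro ⟨h3, h2⟩; exact ⟨⟨ht.1.trans h3, h2⟩, h3⟩
    rw [hset]
  have hR : (∫ x, (∫ t, ({z : ℝ × ℝ | z.1 < z.2}).indicator (fun z => g z.2) (t, x) ∂μ) ∂μ)
      = ∫ x in Ioc p q, g x * (x - p) := by
    rw [hμ]
    refine setIntegral_congr_fun measurableSet_Ioc fun x hx => ?_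
    have h1 : (fun t => ({z : ℝ × ℝ | z.1 < z.2}).indicator (fun z => g z.2) (t, x))
        = (Iio x).indicator (fun _ => g x) := by
      funext t
      by_cases ht : t < x
      · simp [Set.indicator_apply, ht]
      · simp [Set.indicator_apply, ht]
    rw [h1, setIntegral_indicator measurableSet_Iio]
    have h2 : Ioc p q ∩ Iio x = Ioo p x := by
      ext y
      simp only [mem_inter_iff, mem_Ioc, mem_Ioo, mem_Iio]
      constructor
      · rintro ⟨⟨h1', _⟩, h3⟩; exact ⟨h1', h3⟩
      · rintro ⟨h1', h3⟩; exact ⟨⟨h1', (h3.le.trans hx.2)⟩, h3⟩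
    rw [h2, setIntegral_const, Real.volume_real_Ioo_of_le (by linarith [hx.1.le])]
    simp [smul_eq_mul, mul_comm]
  rw [← hR, ← swap]; exact hL

open Set in
lemma triangle_right {g : ℝ → ℝ} {p q : ℝ} (hpq : p ≤ q) (hg : IntegrableOn g (Ioc p q)) :
    ∫ x in Ioc p q, g x * (q - x) = ∫ t in Ioc p q, ∫ x in Ioc p t, g x := by
  have hmeas : MeasurableSet {z : ℝ × ℝ | z.2 < z.1} :=
    measurableSet_lt measurable_snd measurable_fst
  set μ := volume.restrict (Ioc p q) with hμ
  have hgg : Integrable (fun z : ℝ × ℝ => g z.2) (μ.prod μ) := by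
    have h1 : Integrable (fun _ : ℝ => (1:ℝ)) μ := by
      rw [hμ]; exact integrableOn_const measure_Ioc_lt_top.ne
    simpa using h1.mul_prod hg
  have hind : Integrable (({z : ℝ × ℝ | z.2 < z.1}).indicator fun z => g z.2) (μ.prod μ) :=
    hgg.indicator hmeas
  have swap := integral_integral_swap (f := fun t x : ℝ =>
      ({z : ℝ × ℝ | z.2 < z.1}).indicator (fun z => g z.2) (t, x)) (μ := μ) (ν := μ)
      (by exact hind)
  have hL : (∫ t, (∫ x, ({z : ℝ × ℝ | z.2 < z.1}).indicator (fun z => g z.2) (t, x) ∂μ) ∂μ)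
      = ∫ t in Ioc p q, ∫ x in Ioc p t, g x := by
    rw [hμ]
    refine setIntegral_congr_fun measurableSet_Ioc fun t ht => ?_
    have h1 : (fun x => ({z : ℝ × ℝ | z.2 < z.1}).indicator (fun z => g z.2) (t, x))
        = (Iio t).indicator g := by
      funext x
      by_cases hx : x < t
      · simp [Set.indicator_apply, hx]
      · simp [Set.indicator_apply, hx]
    rw [h1, setIntegral_indicator measurableSet_Iio]
    have h2 : Ioc p q ∩ Iio t = Ioo p t := by
      ext y
      simp only [mem_inter_iff, mem_Ioc, mem_Ioo, mem_Iio]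
      constructor
      · rintro ⟨⟨h1', _⟩, h3⟩; exact ⟨h1', h3⟩
      · rintro ⟨h1', h3⟩; exact ⟨⟨h1', (h3.le.trans ht.2)⟩, h3⟩
    rw [h2, integral_Ioc_eq_integral_Ioo]
  have hR : (∫ x, (∫ t, ({z : ℝ × ℝ | z.2 < z.1}).indicator (fun z => g z.2) (t, x) ∂μ) ∂μ)
      = ∫ x in Ioc p q, g x * (q - x) := by
    rw [hμ]
    refine setIntegral_congr_fun measurableSet_Ioc fun x hx => ?_
    have h1 : (fun t => ({z : ℝ × ℝ | z.2 < z.1}).indicator (fun z => g z.2) (t, x))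
        = (Ioi x).indicator (fun _ => g x) := by
      funext t
      by_cases ht : x < t
      · simp [Set.indicator_apply, ht]
      · simp [Set.indicator_apply, ht]
    rw [h1, setIntegral_indicator measurableSet_Ioi]
    have h2 : Ioc p q ∩ Ioi x = Ioc x q := by
      ext y
      simp only [mem_inter_iff, mem_Ioc, mem_Ioi]
      constructor
      · rintro ⟨⟨_, h2'⟩, h3⟩; exact ⟨h3, h2'⟩
      · rintro ⟨h3, h2'⟩; exact ⟨⟨hx.1.trans h3, h2'⟩, h3⟩
    rw [h2, setIntegral_const, Real.volume_real_Ioc_of_le (by linarith [hx.2])]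
    simp [smul_eq_mul, mul_comm]
  rw [← hR, ← swap]; exact hL

/-- Integration by parts against a hat function: if `f` is locally absolutely continuous
with locally integrable derivative `f'`, then
`∫ f'(x) N₂(2^j x - ν) dx = -2^j ∫ f(x) h̃_{j-1,ν}(x) dx` where `h̃_{j-1,ν}(x) = h(2^{j-1}x - ν/2)`. -/
theorem deriv_pairing_hat (f f' : ℝ → ℝ)
    (hf' : LocallyIntegrable f' volume)
    (hf : ∀ x : ℝ, f x = f 0 + ∫ t in (0:ℝ)..x, f' t)
    (j : ℕ) (hj : 1 ≤ j) (ν : ℤ) :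
    ∫ x : ℝ, f' x * hat (2 ^ j * x - (ν : ℝ)) =
      -(2 ^ j) * ∫ x : ℝ, f x * haar (2 ^ (j - 1) * x - (ν : ℝ) / 2) := by
  set d : ℝ := 2 ^ (j - 1) with hd_def
  set c : ℝ := 2 ^ j with hc_def
  have hd : 0 < d := by positivity
  have hc : 0 < c := by positivity
  have hcd : c = 2 * d := by
    have h1 : j = j - 1 + 1 := (Nat.succ_pred_eq_of_pos hj).symm
    rw [hc_def, hd_def]
    nth_rewrite 1 [h1]
    rw [pow_succ]
    ring
  set a : ℝ := (ν : ℝ) / c with ha_def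
  set m : ℝ := ((ν : ℝ) + 1) / c with hm_def
  set b : ℝ := ((ν : ℝ) + 2) / c with hb_def
  have hca : c * a = ν := by rw [ha_def]; field_simp
  have hcm : c * m = ν + 1 := by rw [hm_def]; field_simp
  have hcb : c * b = ν + 2 := by rw [hb_def]; field_simp
  have hda : d * a = ν / 2 := by rw [ha_def, hcd]; field_simp
  have hdm : d * m = ν / 2 + 1 / 2 := by rw [hm_def, hcd]; field_simp
  have hdb : d * b = ν / 2 + 1 := by rw [hb_def, hcd]; field_simp
  have ham : a < m := by
    have h1 : c * a < c * m := by rw [hca, hcm]; linarith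
    exact lt_of_mul_lt_mul_left h1 hc.le
  have hmb : m < b := by
    have h1 : c * m < c * b := by rw [hcm, hcb]; linarith
    exact lt_of_mul_lt_mul_left h1 hc.le
  have hcma : c * (m - a) = 1 := by rw [mul_sub, hca, hcm]; ring
  have hcbm : c * (b - m) = 1 := by rw [mul_sub, hcm, hcb]; ring
  -- interval integrability of f'
  have hf'ii : ∀ p q : ℝ, IntervalIntegrable f' volume p q := fun p q =>
    intervalIntegrable_iff.2
      ((hf'.integrableOn_isCompact isCompact_uIcc).mono_set Set.Ioc_subset_Icc_self)
  -- continuity of f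
  have hfc : Continuous f := by
    have h1 : Continuous fun x : ℝ => ∫ t in (0:ℝ)..x, f' t :=
      intervalIntegral.continuous_primitive (fun p q => hf'ii p q) 0
    exact (continuous_const.add h1).congr fun x => (hf x).symm
  have hfint : ∀ p q : ℝ, IntegrableOn f (Set.Ioc p q) volume := fun p q =>
    ((hfc.locallyIntegrable).integrableOn_isCompact isCompact_Icc).mono_set
      Set.Ioc_subset_Icc_self
  -- FTC
  have hFTC : ∀ p q : ℝ, p ≤ q → (∫ x in Set.Ioc p q, f' x) = f q - f p := by
    intro p q hpq
    have h2 := intervalIntegral.integral_interval_sub_left (hf'ii 0 q) (hf'ii 0 p)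
    rw [← intervalIntegral.integral_of_le hpq, ← h2, hf q, hf p]
    ring
  -- hat side: support
  have hhat0 : ∀ x : ℝ, x ∉ Set.Ioc a b → f' x * hat (c * x - ν) = 0 := by
    intro x hx
    simp only [Set.mem_Ioc, not_and_or, not_lt, not_le] at hx
    have hval : hat (c * x - ν) = 0 := by
      unfold hat
      rcases hx with h | h
      · have harg : c * x - ν ≤ 0 := by
          nlinarith [mul_le_mul_of_nonneg_left h hc.le]
        split_ifs with h1 h2
        · linarith [h1.1]
        · linarith [h2.1]
        · rfl
      · have harg : 2 ≤ c * x - ν := by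
          nlinarith [mul_le_mul_of_nonneg_left h.le hc.le]
        split_ifs with h1 h2
        · linarith [h1.2]
        · linarith [h2.2]
        · rfl
    rw [hval, mul_zero]
  have hhatInt : (∫ x : ℝ, f' x * hat (c * x - ν))
      = ∫ x in Set.Ioc a b, f' x * hat (c * x - ν) :=
    (setIntegral_eq_integral_of_forall_compl_eq_zero hhat0).symm
  -- hat values on the two halves
  have hhat1 : Set.EqOn (fun x => f' x * hat (c * x - ν)) (fun x => f' x * (c * (x - a)))
      (Set.Ioc a m) := by
    intro x hx
    have h1 : 0 ≤ c * x - ν := by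
      nlinarith [mul_le_mul_of_nonneg_left hx.1.le hc.le]
    have h2 : c * x - ν ≤ 1 := by
      nlinarith [mul_le_mul_of_nonneg_left hx.2 hc.le]
    have hval : hat (c * x - ν) = c * x - ν := by unfold hat; rw [if_pos ⟨h1, h2⟩]
    have hlin : c * (x - a) = c * x - ν := by rw [mul_sub, hca]
    simp only [hval, hlin]
  have hhat2 : Set.EqOn (fun x => f' x * hat (c * x - ν)) (fun x => f' x * (c * (b - x)))
      (Set.Ioc m b) := by
    intro x hx
    have h1 : 1 ≤ c * x - ν := by
      nlinarith [mul_le_mul_of_nonneg_left hx.1.le hc.le]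
    have h2 : c * x - ν ≤ 2 := by
      nlinarith [mul_le_mul_of_nonneg_left hx.2 hc.le]
    have hval : hat (c * x - ν) = 2 - (c * x - ν) := by
      unfold hat
      split_ifs with h1' h2'
      · linarith [h1'.2]
      · rfl
      · exact absurd ⟨h1, h2⟩ h2'
    have hlin : c * (b - x) = 2 - (c * x - ν) := by rw [mul_sub, hcb]; ring
    simp only [hval, hlin]
  -- integrability of the hat integrand on each half
  have hint1 : IntegrableOn (fun x => f' x * hat (c * x - ν)) (Set.Ioc a m) volume := by
    have h1 : IntervalIntegrable (fun x => f' x * (c * (x - a))) volume a m :=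
      (hf'ii a m).mul_continuousOn
        ((continuous_const.mul (continuous_id.sub continuous_const)).continuousOn)
    exact h1.1.congr_fun (fun x hx => (hhat1 hx).symm) measurableSet_Ioc
  have hint2 : IntegrableOn (fun x => f' x * hat (c * x - ν)) (Set.Ioc m b) volume := by
    have h1 : IntervalIntegrable (fun x => f' x * (c * (b - x))) volume m b :=
      (hf'ii m b).mul_continuousOn
        ((continuous_const.mul (continuous_const.sub continuous_id)).continuousOn)
    exact h1.1.congr_fun (fun x hx => (hhat2 hx).symm) measurableSet_Ioc
  have hsplit : Set.Ioc a m ∪ Set.Ioc m b = Set.Ioc a b := Set.Ioc_union_Ioc_eq_Ioc ham.le hmb.le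
  have hEq1 : (∫ x in Set.Ioc a b, f' x * hat (c * x - ν))
      = (∫ x in Set.Ioc a m, f' x * hat (c * x - ν))
        + ∫ x in Set.Ioc m b, f' x * hat (c * x - ν) := by
    rw [← hsplit, setIntegral_union (Set.Ioc_disjoint_Ioc.2 (le_trans (min_le_left m b) (le_max_right a m))) measurableSet_Ioc hint1 hint2]
  -- evaluate the two hat pieces
  have hP1 : (∫ x in Set.Ioc a m, f' x * hat (c * x - ν))
      = f m - c * ∫ x in Set.Ioc a m, f x := by
    rw [setIntegral_congr_fun measurableSet_Ioc hhat1]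
    have h1 : (∫ x in Set.Ioc a m, f' x * (c * (x - a)))
        = c * ∫ x in Set.Ioc a m, f' x * (x - a) := by
      rw [← integral_const_mul]
      exact integral_congr_ae (Filter.Eventually.of_forall fun x => by ring)
    rw [h1, triangle_left ham.le (hf'ii a m).1]
    have h2 : (∫ t in Set.Ioc a m, ∫ x in Set.Ioc t m, f' x)
        = ∫ t in Set.Ioc a m, (f m - f t) :=
      setIntegral_congr_fun measurableSet_Ioc fun t ht => hFTC t m ht.2
    rw [h2, integral_sub (integrableOn_const (C := f m) measure_Ioc_lt_top.ne) (hfint a m),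
      setIntegral_const, Real.volume_real_Ioc_of_le (by linarith), smul_eq_mul]
    rw [mul_sub, ← mul_assoc, hcma, one_mul]
  have hP2 : (∫ x in Set.Ioc m b, f' x * hat (c * x - ν))
      = c * (∫ x in Set.Ioc m b, f x) - f m := by
    rw [setIntegral_congr_fun measurableSet_Ioc hhat2]
    have h1 : (∫ x in Set.Ioc m b, f' x * (c * (b - x)))
        = c * ∫ x in Set.Ioc m b, f' x * (b - x) := by
      rw [← integral_const_mul]
      exact integral_congr_ae (Filter.Eventually.of_forall fun x => by ring)
    rw [h1, triangle_right hmb.le (hf'ii m b).1]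
    have h2 : (∫ t in Set.Ioc m b, ∫ x in Set.Ioc m t, f' x)
        = ∫ t in Set.Ioc m b, (f t - f m) :=
      setIntegral_congr_fun measurableSet_Ioc fun t ht => hFTC m t ht.1.le
    rw [h2, integral_sub (hfint m b) (integrableOn_const (C := f m) measure_Ioc_lt_top.ne),
      setIntegral_const, Real.volume_real_Ioc_of_le (by linarith), smul_eq_mul]
    rw [mul_sub, ← mul_assoc, hcbm, one_mul]
  -- haar side: support
  have hhaar0 : ∀ x : ℝ, x ∉ Set.Ico a b → f x * haar (d * x - ν / 2) = 0 := by
    intro x hx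
    simp only [Set.mem_Ico, not_and_or, not_le, not_lt] at hx
    have hval : haar (d * x - ν / 2) = 0 := by
      unfold haar
      rcases hx with h | h
      · have harg : d * x - ν / 2 < 0 := by
          nlinarith [mul_lt_mul_of_pos_left h hd]
        split_ifs with h1 h2
        · linarith [h1.1]
        · linarith [h2.1]
        · rfl
      · have harg : 1 ≤ d * x - ν / 2 := by
          nlinarith [mul_le_mul_of_nonneg_left h hd.le]
        split_ifs with h1 h2
        · linarith [h1.2]
        · linarith [h2.2]
        · rfl
    rw [hval, mul_zero]
  have hhaarInt : (∫ x : ℝ, f x * haar (d * x - ν / 2))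
      = ∫ x in Set.Ico a b, f x * haar (d * x - ν / 2) :=
    (setIntegral_eq_integral_of_forall_compl_eq_zero hhaar0).symm
  have hIco : (∫ x in Set.Ico a b, f x * haar (d * x - ν / 2))
      = ∫ x in Set.Ioc a b, f x * haar (d * x - ν / 2) :=
    setIntegral_congr_set Ico_ae_eq_Ioc
  -- integrability of the haar integrand
  have habs : ∀ y : ℝ, |haar y| ≤ 1 := by
    intro y; unfold haar; split_ifs <;> norm_num
  have hmeas_haar : Measurable haar := by
    unfold haar
    refine Measurable.ite ?_ measurable_const (Measurable.ite ?_ measurable_const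
      measurable_const)
    · exact (measurableSet_le measurable_const measurable_id).inter
        (measurableSet_lt measurable_id measurable_const)
    · exact (measurableSet_le measurable_const measurable_id).inter
        (measurableSet_lt measurable_id measurable_const)
  have hhaarI : ∀ p q : ℝ, IntegrableOn (fun x => f x * haar (d * x - ν / 2))
      (Set.Ioc p q) volume := by
    intro p q
    refine Integrable.mono (hfint p q) ?_ ?_
    · exact ((hfc.measurable.mul
        (hmeas_haar.comp ((measurable_id.const_mul d).sub measurable_const)))).aestronglyMeasurable.restrict
    · refine Filter.Eventually.of_forall fun x => ?_
      rw [Real.norm_eq_abs, Real.norm_eq_abs, abs_mul]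
      exact mul_le_of_le_one_right (abs_nonneg _) (habs _)
  have hEqH : (∫ x in Set.Ioc a b, f x * haar (d * x - ν / 2))
      = (∫ x in Set.Ioc a m, f x * haar (d * x - ν / 2))
        + ∫ x in Set.Ioc m b, f x * haar (d * x - ν / 2) := by
    rw [← hsplit, setIntegral_union (Set.Ioc_disjoint_Ioc.2 (le_trans (min_le_left m b) (le_max_right a m))) measurableSet_Ioc
      (hhaarI a m) (hhaarI m b)]
  -- haar values on the two halves
  have hne_m : ∀ᵐ x : ℝ, x ≠ m := by
    rw [MeasureTheory.ae_iff]
    simp only [not_not, Set.setOf_eq_eq_singleton]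
    exact measure_singleton m
  have hne_b : ∀ᵐ x : ℝ, x ≠ b := by
    rw [MeasureTheory.ae_iff]
    simp only [not_not, Set.setOf_eq_eq_singleton]
    exact measure_singleton b
  have hH1 : (∫ x in Set.Ioc a m, f x * haar (d * x - ν / 2)) = ∫ x in Set.Ioc a m, f x := by
    refine setIntegral_congr_ae measurableSet_Ioc ?_
    filter_upwards [hne_m] with x hxm hx
    have h1 : 0 ≤ d * x - ν / 2 := by
      nlinarith [mul_le_mul_of_nonneg_left hx.1.le hd.le]
    have h2 : d * x - ν / 2 < 1 / 2 := by
      have hxm' : x < m := lt_of_le_of_ne hx.2 hxm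
      nlinarith [mul_lt_mul_of_pos_left hxm' hd]
    unfold haar
    rw [if_pos ⟨h1, h2⟩, mul_one]
  have hH2 : (∫ x in Set.Ioc m b, f x * haar (d * x - ν / 2))
      = - ∫ x in Set.Ioc m b, f x := by
    rw [← integral_neg]
    refine setIntegral_congr_ae measurableSet_Ioc ?_
    filter_upwards [hne_b] with x hxb hx
    have h1 : 1 / 2 ≤ d * x - ν / 2 := by
      nlinarith [mul_le_mul_of_nonneg_left hx.1.le hd.le]
    have h2 : d * x - ν / 2 < 1 := by
      have hxb' : x < b := lt_of_le_of_ne hx.2 hxb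
      nlinarith [mul_lt_mul_of_pos_left hxb' hd]
    unfold haar
    rw [if_neg (by intro hcon; linarith [hcon.2]), if_pos ⟨h1, h2⟩]
    ring
  rw [hhatInt, hEq1, hP1, hP2, hhaarInt, hIco, hEqH, hH1, hH2]
  ring
end

section
/- Let 0 < p ≤ ∞ and ℓ ≥ 0 be an integer. For any measurable f : ℝ → ℂ, define 𝔐_j f(x) = sup_{|h| ≤ 2^{-j}} |f(x+h)| and 𝔐*_j f(x) = sup_{|h| ≤ 2^{-j+2}} |f(x+h)|. Then ‖𝔐*_j f‖_{L^p} ≤ C·2^{ℓ/p}·‖𝔐_{j+ℓ} f‖_{L^p}, with C depending only on p. -/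
open MeasureTheory Real
open scoped ENNReal

/-- The maximal function `x ↦ sup_{|h| ≤ r} |f(x+h)|`, valued in `ℝ≥0∞`. -/
noncomputable def Mmax (r : ℝ) (f : ℝ → ℂ) (x : ℝ) : ℝ≥0∞ :=
  ⨆ h : {h : ℝ // |h| ≤ r}, (‖f (x + h.1)‖₊ : ℝ≥0∞)

/-- The `L^p` norm of an `ℝ≥0∞`-valued function, with the essential-sup modification
for `p = ∞`. -/
noncomputable def pNorm (p : ℝ≥0∞) (g : ℝ → ℝ≥0∞) : ℝ≥0∞ :=
  if p = ∞ then essSup g volume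
  else (∫⁻ x : ℝ, (g x) ^ p.toReal) ^ (1 / p.toReal)

/-- The open-ball maximal function. -/
noncomputable def Nmax (r : ℝ) (f : ℝ → ℂ) (x : ℝ) : ℝ≥0∞ :=
  ⨆ h : {h : ℝ // |h| < r}, (‖f (x + h.1)‖₊ : ℝ≥0∞)

lemma Nmax_le_Mmax (r : ℝ) (f : ℝ → ℂ) (x : ℝ) : Nmax r f x ≤ Mmax r f x := by
  refine iSup_le fun h => ?_
  exact le_iSup_of_le (i := ⟨h.1, h.2.le⟩) (by rfl)

lemma measurable_Nmax (r : ℝ) (f : ℝ → ℂ) : Measurable (Nmax r f) := by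
  apply LowerSemicontinuous.measurable
  intro x t ht
  obtain ⟨⟨h, hh⟩, hgt⟩ := lt_iSup_iff.mp ht
  rw [Metric.eventually_nhds_iff]
  refine ⟨r - |h|, by linarith, fun {y} hy => ?_⟩
  have h2 : |x + h - y| < r := by
    rw [Real.dist_eq] at hy
    calc |x + h - y| = |h + (x - y)| := by ring_nf
      _ ≤ |h| + |x - y| := abs_add_le _ _
      _ < r := by rw [abs_sub_comm]; linarith
  refine lt_of_lt_of_le hgt ?_
  exact le_iSup_of_le (i := ⟨x + h - y, h2⟩) (by rw [show y + (x + h - y) = x + h by ring])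

lemma covering {R r : ℝ} (hr : 0 < r) (N : ℕ) (hRN : R ≤ N * r) (f : ℝ → ℂ) (x h : ℝ)
    (hh : |h| ≤ R) :
    ∃ ν ∈ Finset.Icc (-(N:ℤ)) (N:ℤ), (‖f (x + h)‖₊ : ℝ≥0∞) ≤ Nmax r f (x + ν * r) := by
  refine ⟨round (h / r), ?_, ?_⟩
  · rw [Finset.mem_Icc, ← abs_le]
    have h1 : |(round (h/r) : ℝ)| ≤ |h/r| + 1/2 := by
      have h2 := abs_sub_round (h/r)
      calc |(round (h/r) : ℝ)| = |h/r - (h/r - round (h/r))| := by ring_nf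
        _ ≤ |h/r| + |h/r - round (h/r)| := abs_sub _ _
        _ ≤ |h/r| + 1/2 := by linarith
    have h3 : |h/r| ≤ N := by
      rw [abs_div, abs_of_pos hr, div_le_iff₀ hr]
      calc |h| ≤ R := hh
        _ ≤ N * r := hRN
    have h4 : |(round (h/r) : ℝ)| < (N:ℝ) + 1 := by linarith
    have h5 : ((|round (h/r)| : ℤ) : ℝ) < (((N:ℤ) + 1 : ℤ) : ℝ) := by push_cast; push_cast at h4; linarith
    exact Int.lt_add_one_iff.mp (by exact_mod_cast h5)
  · set ν : ℤ := round (h / r) with hν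
    have hne : r ≠ 0 := hr.ne'
    have h6 : |h - ν * r| < r := by
      have h2 := abs_sub_round (h/r)
      have : h - ν * r = (h/r - ν) * r := by field_simp
      rw [this, abs_mul, abs_of_pos hr]
      calc |h/r - ν| * r ≤ 1/2 * r := by nlinarith [abs_nonneg (h/r - (ν:ℝ))]
        _ < r := by linarith
    refine le_iSup_of_le (i := ⟨h - ν * r, h6⟩) ?_
    rw [show x + ν * r + (h - ν * r) = x + h by ring]

/-- `‖𝔐*_j f‖_p ≤ C 2^{ℓ/p} ‖𝔐_{j+ℓ} f‖_p` for `0 < p ≤ ∞`, with `C = C(p)`. -/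
theorem maximal_function_comparison (p : ℝ≥0∞) (hp : 0 < p) :
    ∃ C : ℝ, 0 < C ∧
      ∀ (f : ℝ → ℂ) (j ℓ : ℕ),
        pNorm p (Mmax (2 ^ (-(j:ℝ) + 2)) f) ≤
          ENNReal.ofReal (C * 2 ^ ((ℓ:ℝ) / p.toReal)) *
            pNorm p (Mmax (2 ^ (-((j:ℝ) + (ℓ:ℝ)))) f) := by
  refine ⟨2 ^ (4 / p.toReal), by positivity, fun f j ℓ => ?_⟩
  set q := p.toReal with hqdef
  set R : ℝ := 2 ^ (-(j:ℝ) + 2) with hRdef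
  set r : ℝ := 2 ^ (-((j:ℝ) + (ℓ:ℝ))) with hrdef
  have hr : 0 < r := rpow_pos_of_pos two_pos _
  set N : ℕ := 2 ^ (ℓ + 2) with hNdef
  have hNcast : (N : ℝ) = 2 ^ ((ℓ:ℝ) + 2) := by
    rw [hNdef]; push_cast; rw [← Real.rpow_natCast 2 (ℓ+2)]; congr 1; push_cast; ring
  have hRN : R ≤ N * r := by
    rw [hNcast, hrdef, hRdef, ← Real.rpow_add two_pos]
    apply le_of_eq; congr 1; ring
  set s : Finset ℤ := Finset.Icc (-(N:ℤ)) (N:ℤ) with hsdef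
  have hcard : s.card = 2 * N + 1 := by
    rw [hsdef, Int.card_Icc]
    omega
  have hcard' : s.card ≤ 2 ^ (ℓ + 4) := by
    rw [hcard, hNdef]
    have : 2 ^ (ℓ + 4) = 2 * 2 ^ (ℓ + 2) + 2 ^ (ℓ + 3) := by ring
    have h1 : 1 ≤ 2 ^ (ℓ + 3) := Nat.one_le_two_pow
    omega
  by_cases hpt : p = ∞
  · -- p = ∞
    have hq0 : q = 0 := by rw [hqdef, hpt, ENNReal.toReal_top]
    rw [pNorm, pNorm, if_pos hpt, if_pos hpt, hq0]
    simp only [div_zero, Real.rpow_zero, mul_one, ENNReal.ofReal_one, one_mul]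
    set E := essSup (Mmax r f) volume with hE
    have key : ∀ᵐ x : ℝ, ∀ ν ∈ (s : Set ℤ), Mmax r f (x + ν * r) ≤ E := by
      rw [ae_ball_iff s.countable_toSet]
      intro ν _
      have h0 : ∀ᵐ y : ℝ, Mmax r f y ≤ E := ENNReal.ae_le_essSup _
      exact ((measurePreserving_add_right volume ((ν:ℝ) * r)).quasiMeasurePreserving).ae h0
    refine essSup_le_of_ae_le E ?_
    filter_upwards [key] with x hx
    refine iSup_le fun ⟨h, hh⟩ => ?_
    obtain ⟨ν, hν, hb⟩ := covering hr N hRN f x h hh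
    exact le_trans hb (le_trans (Nmax_le_Mmax _ _ _) (hx ν (by exact_mod_cast hν)))
  · -- p < ∞
    have hq : 0 < q := ENNReal.toReal_pos hp.ne' hpt
    have hq0 : q ≠ 0 := hq.ne'
    rw [pNorm, pNorm, if_neg hpt, if_neg hpt]
    have pt : ∀ x : ℝ, Mmax R f x ^ q ≤ ∑ ν ∈ s, Nmax r f (x + ν * r) ^ q := by
      intro x
      have h1 : Mmax R f x ≤ (∑ ν ∈ s, Nmax r f (x + ν * r) ^ q) ^ (1/q) := by
        refine iSup_le fun ⟨h, hh⟩ => ?_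
        obtain ⟨ν, hν, hb⟩ := covering hr N hRN f x h hh
        calc (‖f (x + h)‖₊ : ℝ≥0∞) ≤ Nmax r f (x + ν * r) := hb
          _ = (Nmax r f (x + ν * r) ^ q) ^ (1/q) := by
              rw [← ENNReal.rpow_mul, mul_one_div_cancel hq0, ENNReal.rpow_one]
          _ ≤ _ := ENNReal.rpow_le_rpow
              (Finset.single_le_sum (f := fun ν : ℤ => Nmax r f (x + ν * r) ^ q)
                (fun i _ => zero_le) hν) (by positivity)
      calc Mmax R f x ^ q ≤ ((∑ ν ∈ s, Nmax r f (x + ν * r) ^ q) ^ (1/q)) ^ q :=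
            ENNReal.rpow_le_rpow h1 hq.le
        _ = _ := by rw [← ENNReal.rpow_mul, one_div_mul_cancel hq0, ENNReal.rpow_one]
    have int1 : ∫⁻ x : ℝ, Mmax R f x ^ q ≤ (s.card : ℝ≥0∞) * ∫⁻ x : ℝ, Mmax r f x ^ q := by
      calc ∫⁻ x : ℝ, Mmax R f x ^ q ≤ ∫⁻ x : ℝ, ∑ ν ∈ s, Nmax r f (x + ν * r) ^ q :=
            lintegral_mono pt
        _ = ∑ ν ∈ s, ∫⁻ x : ℝ, Nmax r f (x + ν * r) ^ q := by
            refine lintegral_finset_sum _ fun ν _ => ?_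
            exact ((measurable_Nmax r f).comp (measurable_add_const _)).pow_const _
        _ = ∑ ν ∈ s, ∫⁻ x : ℝ, Nmax r f x ^ q := by
            refine Finset.sum_congr rfl fun ν _ => ?_
            exact lintegral_add_right_eq_self (fun y => Nmax r f y ^ q) _
        _ = (s.card : ℝ≥0∞) * ∫⁻ x : ℝ, Nmax r f x ^ q := by
            rw [Finset.sum_const, nsmul_eq_mul]
        _ ≤ (s.card : ℝ≥0∞) * ∫⁻ x : ℝ, Mmax r f x ^ q := by
            refine mul_le_mul_right (lintegral_mono fun x => ?_) _
            exact ENNReal.rpow_le_rpow (Nmax_le_Mmax r f x) hq.le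
    have coeff : ((s.card : ℝ≥0∞)) ^ (1/q) ≤
        ENNReal.ofReal (2 ^ (4 / q) * 2 ^ ((ℓ:ℝ) / q)) := by
      have e1 : (2:ℝ) ^ (4 / q) * 2 ^ ((ℓ:ℝ) / q) = 2 ^ (((ℓ:ℝ) + 4) / q) := by
        rw [← Real.rpow_add two_pos]; congr 1; ring
      rw [e1, ← ENNReal.ofReal_rpow_of_pos two_pos, ENNReal.ofReal_ofNat]
      calc ((s.card : ℝ≥0∞)) ^ (1/q) ≤ ((2 ^ (ℓ + 4) : ℕ) : ℝ≥0∞) ^ (1/q) :=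
            ENNReal.rpow_le_rpow (by exact_mod_cast Nat.cast_le.mpr hcard') (by positivity)
        _ = ((2 : ℝ≥0∞) ^ ((ℓ + 4 : ℕ) : ℝ)) ^ (1/q) := by
            rw [ENNReal.rpow_natCast]; push_cast; ring_nf
        _ = (2 : ℝ≥0∞) ^ (((ℓ:ℝ) + 4) / q) := by
            rw [← ENNReal.rpow_mul]; push_cast; congr 1; ring
    calc (∫⁻ x : ℝ, Mmax R f x ^ q) ^ (1/q)
        ≤ ((s.card : ℝ≥0∞) * ∫⁻ x : ℝ, Mmax r f x ^ q) ^ (1/q) :=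
          ENNReal.rpow_le_rpow int1 (by positivity)
      _ = ((s.card : ℝ≥0∞)) ^ (1/q) * (∫⁻ x : ℝ, Mmax r f x ^ q) ^ (1/q) :=
          ENNReal.mul_rpow_of_nonneg _ _ (by positivity)
      _ ≤ _ := mul_le_mul_left coeff _
end
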